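/- arXiv:2001.07174 — 2 statements merged into one kernel-verified Lean document; each statement's English description precedes it below -/
import Mathlib

section
/- Let d_G(ξ,η,σ) = ((|ξ|² + |η|²)² + σ²)^{1/4} be the gauge norm on ℝ^{2n+1} and let Q = 2n+2 be the homogeneous dimension. Then the function d_G^{2−Q} satisfies Δ_{ℍⁿ} ( d_G^{2−Q} ) = 0 at every point of ℝ^{2n+1} ∖ {0}; that is, d_G^{2−Q} is, up to a multiplicative constant, the fundamental solution of the Kohn Laplacian on the Heisenberg group ℍⁿ. -/
open scoped BigOperators

noncomputable section

/-- The underlying space `ℝ^{2n+1}` of the Heisenberg group `ℍⁿ`, with coordinates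
`(x, y, t)`, `x, y ∈ ℝⁿ`, `t ∈ ℝ`. -/
abbrev Heis (n : ℕ) : Type := (Fin n → ℝ) × (Fin n → ℝ) × ℝ

/-- The Heisenberg vector field `X_i = ∂_{x_i} + 2 y_i ∂_t` applied to `u`. -/
def Xv (n : ℕ) (i : Fin n) (u : Heis n → ℝ) (p : Heis n) : ℝ :=
  fderiv ℝ u p (Pi.single i 1, 0, 2 * p.2.1 i)

/-- The Heisenberg vector field `Y_i = ∂_{y_i} - 2 x_i ∂_t` applied to `u`. -/
def Yv (n : ℕ) (i : Fin n) (u : Heis n → ℝ) (p : Heis n) : ℝ :=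
  fderiv ℝ u p (0, Pi.single i 1, -(2 * p.1 i))

/-- The derivative `∂_t u`. -/
def Tv (n : ℕ) (u : Heis n → ℝ) (p : Heis n) : ℝ :=
  fderiv ℝ u p (0, 0, 1)

/-- The gauge norm `d_G(ξ,η,σ) = ((|ξ|² + |η|²)² + σ²)^{1/4}` on `ℝ^{2n+1}`. -/
def dG (n : ℕ) (p : Heis n) : ℝ :=
  ((∑ i, p.1 i ^ 2 + ∑ i, p.2.1 i ^ 2) ^ 2 + p.2.2 ^ 2) ^ ((1 : ℝ) / 4)


namespace GaugeAux

variable {n : ℕ}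

def pX (n : ℕ) (i : Fin n) : Heis n →L[ℝ] ℝ :=
  (ContinuousLinearMap.proj i).comp (ContinuousLinearMap.fst ℝ (Fin n → ℝ) ((Fin n → ℝ) × ℝ))

def pY (n : ℕ) (i : Fin n) : Heis n →L[ℝ] ℝ :=
  (ContinuousLinearMap.proj i).comp ((ContinuousLinearMap.fst ℝ (Fin n → ℝ) ℝ).comp
    (ContinuousLinearMap.snd ℝ (Fin n → ℝ) ((Fin n → ℝ) × ℝ)))

def pT (n : ℕ) : Heis n →L[ℝ] ℝ :=
  (ContinuousLinearMap.snd ℝ (Fin n → ℝ) ℝ).comp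
    (ContinuousLinearMap.snd ℝ (Fin n → ℝ) ((Fin n → ℝ) × ℝ))

@[simp] lemma pX_apply (i : Fin n) (h : Heis n) : pX n i h = h.1 i := rfl
@[simp] lemma pY_apply (i : Fin n) (h : Heis n) : pY n i h = h.2.1 i := rfl
@[simp] lemma pT_apply (h : Heis n) : pT n h = h.2.2 := rfl

def S (n : ℕ) (q : Heis n) : ℝ := ∑ i, q.1 i * q.1 i + ∑ i, q.2.1 i * q.2.1 i

def w (n : ℕ) (q : Heis n) : ℝ := S n q * S n q + q.2.2 * q.2.2

def DS (n : ℕ) (q : Heis n) : Heis n →L[ℝ] ℝ :=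
  (∑ i, (2 * q.1 i) • pX n i) + ∑ i, (2 * q.2.1 i) • pY n i

def Dw (n : ℕ) (q : Heis n) : Heis n →L[ℝ] ℝ :=
  (2 * S n q) • DS n q + (2 * q.2.2) • pT n

lemma hasFDerivAt_S (q : Heis n) : HasFDerivAt (S n) (DS n q) q := by
  have hx : ∀ i : Fin n, HasFDerivAt (fun q : Heis n => q.1 i * q.1 i)
      ((2 * q.1 i) • pX n i) q := by
    intro i
    have h := ((pX n i).hasFDerivAt (x := q)).mul ((pX n i).hasFDerivAt (x := q))
    refine h.congr_fderiv ?_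
    refine ContinuousLinearMap.ext fun v => ?_
    simp [two_mul, add_smul]
  have hy : ∀ i : Fin n, HasFDerivAt (fun q : Heis n => q.2.1 i * q.2.1 i)
      ((2 * q.2.1 i) • pY n i) q := by
    intro i
    have h := ((pY n i).hasFDerivAt (x := q)).mul ((pY n i).hasFDerivAt (x := q))
    refine h.congr_fderiv ?_
    refine ContinuousLinearMap.ext fun v => ?_
    simp [two_mul, add_smul]
  exact (HasFDerivAt.fun_sum (fun i _ => hx i)).add (HasFDerivAt.fun_sum (fun i _ => hy i))

lemma hasFDerivAt_w (q : Heis n) : HasFDerivAt (w n) (Dw n q) q := by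
  have h := ((hasFDerivAt_S q).mul (hasFDerivAt_S q)).add
    (((pT n).hasFDerivAt (x := q)).mul ((pT n).hasFDerivAt (x := q)))
  refine h.congr_fderiv ?_
  refine ContinuousLinearMap.ext fun v => ?_
  simp [Dw, two_mul, add_smul]

lemma DS_apply (q h : Heis n) :
    DS n q h = (∑ i, 2 * q.1 i * h.1 i) + ∑ i, 2 * q.2.1 i * h.2.1 i := by
  simp [DS]

lemma DS_eX (q : Heis n) (i : Fin n) (c : ℝ) :
    DS n q ((Pi.single i 1 : Fin n → ℝ), 0, c) = 2 * q.1 i := by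
  simp [DS_apply, Pi.single_apply, mul_ite]

lemma DS_eY (q : Heis n) (i : Fin n) (c : ℝ) :
    DS n q (0, (Pi.single i 1 : Fin n → ℝ), c) = 2 * q.2.1 i := by
  simp [DS_apply, Pi.single_apply, mul_ite]

lemma Dw_eX (q : Heis n) (i : Fin n) :
    Dw n q ((Pi.single i 1 : Fin n → ℝ), 0, 2 * q.2.1 i)
      = 4 * S n q * q.1 i + 4 * q.2.2 * q.2.1 i := by
  simp [Dw, DS_eX]
  ring

lemma Dw_eY (q : Heis n) (i : Fin n) :
    Dw n q (0, (Pi.single i 1 : Fin n → ℝ), -(2 * q.1 i))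
      = 4 * S n q * q.2.1 i - 4 * q.2.2 * q.1 i := by
  simp [Dw, DS_eY]
  ring

end GaugeAux

namespace GaugeAux

variable {n : ℕ}

lemma w_pos {p : Heis n} (hp : p ≠ 0) : 0 < w n p := by
  obtain ⟨x, y, t⟩ := p
  have h0 : 0 ≤ w n (x, y, t) := by
    have := mul_self_nonneg (S n (x, y, t)); have := mul_self_nonneg t
    unfold w; nlinarith
  rcases h0.lt_or_eq with h | h
  · exact h
  · exfalso
    apply hp
    have hS2 : S n (x, y, t) * S n (x, y, t) = 0 := by
      have := mul_self_nonneg (S n (x, y, t)); have := mul_self_nonneg t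
      unfold w at h; nlinarith
    have ht2 : t * t = 0 := by
      have := mul_self_nonneg (S n (x, y, t)); have := mul_self_nonneg t
      unfold w at h; nlinarith
    have hS : S n (x, y, t) = 0 := mul_self_eq_zero.mp hS2
    have ht : t = 0 := mul_self_eq_zero.mp ht2
    have hx2 : ∑ i, x i * x i = 0 ∧ ∑ i, y i * y i = 0 := by
      have h1 : (0:ℝ) ≤ ∑ i, x i * x i := Finset.sum_nonneg fun i _ => mul_self_nonneg _
      have h2 : (0:ℝ) ≤ ∑ i, y i * y i := Finset.sum_nonneg fun i _ => mul_self_nonneg _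
      unfold S at hS
      constructor <;> nlinarith
    have hx : ∀ i, x i = 0 := by
      intro i
      have := (Finset.sum_eq_zero_iff_of_nonneg
        (fun j _ => mul_self_nonneg (x j))).mp hx2.1 i (Finset.mem_univ i)
      exact mul_self_eq_zero.mp this
    have hy : ∀ i, y i = 0 := by
      intro i
      have := (Finset.sum_eq_zero_iff_of_nonneg
        (fun j _ => mul_self_nonneg (y j))).mp hx2.2 i (Finset.mem_univ i)
      exact mul_self_eq_zero.mp this
    refine Prod.ext ?_ (Prod.ext ?_ ?_) <;> simp [ht]
    · funext i; exact hx i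
    · funext i; exact hy i

lemma continuous_w : Continuous (w n) := by
  unfold w S
  fun_prop

def Xg (n : ℕ) (a : ℝ) (i : Fin n) (q : Heis n) : ℝ :=
  a * (w n q ^ (a - 1) * (4 * S n q * q.1 i + 4 * q.2.2 * q.2.1 i))

def Yg (n : ℕ) (a : ℝ) (i : Fin n) (q : Heis n) : ℝ :=
  a * (w n q ^ (a - 1) * (4 * S n q * q.2.1 i - 4 * q.2.2 * q.1 i))

lemma hasFDerivAt_v (a : ℝ) {q : Heis n} (hq : w n q ≠ 0) :
    HasFDerivAt (fun q => w n q ^ a) ((a * w n q ^ (a - 1)) • Dw n q) q :=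
  (hasFDerivAt_w q).rpow_const (Or.inl hq)

lemma Xv_v (a : ℝ) (i : Fin n) {q : Heis n} (hq : w n q ≠ 0) :
    Xv n i (fun q => w n q ^ a) q = Xg n a i q := by
  unfold Xv Xg
  rw [(hasFDerivAt_v a hq).fderiv, ContinuousLinearMap.smul_apply, Dw_eX]
  simp [smul_eq_mul]
  ring

lemma Yv_v (a : ℝ) (i : Fin n) {q : Heis n} (hq : w n q ≠ 0) :
    Yv n i (fun q => w n q ^ a) q = Yg n a i q := by
  unfold Yv Yg
  rw [(hasFDerivAt_v a hq).fderiv, ContinuousLinearMap.smul_apply, Dw_eY]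
  simp [smul_eq_mul]
  ring

end GaugeAux

namespace GaugeAux

variable {n : ℕ}

lemma XXv (a : ℝ) (i : Fin n) {p : Heis n} (hp : w n p ≠ 0) :
    Xv n i (Xv n i (fun q => w n q ^ a)) p
      = a * (w n p ^ (a - 1) * (4 * S n p + 8 * p.1 i * p.1 i + 8 * p.2.1 i * p.2.1 i)
          + (a - 1) * w n p ^ (a - 2)
            * (4 * S n p * p.1 i + 4 * p.2.2 * p.2.1 i)
            * (4 * S n p * p.1 i + 4 * p.2.2 * p.2.1 i)) := by
  have hev : ∀ᶠ q in nhds p, w n q ≠ 0 :=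
    (continuous_w.continuousAt).eventually_ne hp
  have heq : (fun q : Heis n => (fderiv ℝ (fun q => w n q ^ a) q)
      ((Pi.single i 1 : Fin n → ℝ), 0, 2 * q.2.1 i)) =ᶠ[nhds p] Xg n a i :=
    hev.mono fun q hq => Xv_v a i hq
  unfold Xv
  rw [heq.fderiv_eq]
  have hP : HasFDerivAt (fun q : Heis n => 4 * S n q * q.1 i + 4 * q.2.2 * q.2.1 i)
      (((4 * S n p) • pX n i + p.1 i • ((4:ℝ) • DS n p))
        + ((4 * p.2.2) • pY n i + p.2.1 i • ((4:ℝ) • pT n))) p := by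
    exact ((((hasFDerivAt_S p).const_mul 4).mul ((pX n i).hasFDerivAt)).add
      ((((pT n).hasFDerivAt (x := p)).const_mul 4).mul ((pY n i).hasFDerivAt)))
  have hXg : HasFDerivAt (Xg n a i)
      (a • ((w n p ^ (a - 1)) • (((4 * S n p) • pX n i + p.1 i • ((4:ℝ) • DS n p))
          + ((4 * p.2.2) • pY n i + p.2.1 i • ((4:ℝ) • pT n)))
        + (4 * S n p * p.1 i + 4 * p.2.2 * p.2.1 i)
            • (((a - 1) * w n p ^ (a - 1 - 1)) • Dw n p))) p :=
    (((hasFDerivAt_w p).rpow_const (Or.inl hp)).mul hP).const_mul a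
  rw [hXg.fderiv]
  simp only [ContinuousLinearMap.smul_apply, ContinuousLinearMap.add_apply,
    smul_eq_mul, pX_apply, pY_apply, pT_apply, Dw_eX, DS_eX,
    Pi.single_eq_same, Pi.zero_apply]
  rw [show a - 1 - 1 = a - 2 by ring]
  ring

lemma YYv (a : ℝ) (i : Fin n) {p : Heis n} (hp : w n p ≠ 0) :
    Yv n i (Yv n i (fun q => w n q ^ a)) p
      = a * (w n p ^ (a - 1) * (4 * S n p + 8 * p.1 i * p.1 i + 8 * p.2.1 i * p.2.1 i)
          + (a - 1) * w n p ^ (a - 2)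
            * (4 * S n p * p.2.1 i - 4 * p.2.2 * p.1 i)
            * (4 * S n p * p.2.1 i - 4 * p.2.2 * p.1 i)) := by
  have hev : ∀ᶠ q in nhds p, w n q ≠ 0 :=
    (continuous_w.continuousAt).eventually_ne hp
  have heq : (fun q : Heis n => (fderiv ℝ (fun q => w n q ^ a) q)
      (0, (Pi.single i 1 : Fin n → ℝ), -(2 * q.1 i))) =ᶠ[nhds p] Yg n a i :=
    hev.mono fun q hq => Yv_v a i hq
  unfold Yv
  rw [heq.fderiv_eq]
  have hP : HasFDerivAt (fun q : Heis n => 4 * S n q * q.2.1 i - 4 * q.2.2 * q.1 i)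
      (((4 * S n p) • pY n i + p.2.1 i • ((4:ℝ) • DS n p))
        - ((4 * p.2.2) • pX n i + p.1 i • ((4:ℝ) • pT n))) p := by
    exact ((((hasFDerivAt_S p).const_mul 4).mul ((pY n i).hasFDerivAt)).sub
      ((((pT n).hasFDerivAt (x := p)).const_mul 4).mul ((pX n i).hasFDerivAt)))
  have hYg : HasFDerivAt (Yg n a i)
      (a • ((w n p ^ (a - 1)) • (((4 * S n p) • pY n i + p.2.1 i • ((4:ℝ) • DS n p))
          - ((4 * p.2.2) • pX n i + p.1 i • ((4:ℝ) • pT n)))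
        + (4 * S n p * p.2.1 i - 4 * p.2.2 * p.1 i)
            • (((a - 1) * w n p ^ (a - 1 - 1)) • Dw n p))) p :=
    (((hasFDerivAt_w p).rpow_const (Or.inl hp)).mul hP).const_mul a
  rw [hYg.fderiv]
  simp only [ContinuousLinearMap.smul_apply, ContinuousLinearMap.add_apply,
    ContinuousLinearMap.sub_apply, smul_eq_mul, pX_apply, pY_apply, pT_apply,
    Dw_eY, DS_eY, Pi.single_eq_same, Pi.zero_apply]
  rw [show a - 1 - 1 = a - 2 by ring]
  ring

end GaugeAux

/-- With `Q = 2n+2` the homogeneous dimension, the function `d_G^{2-Q}`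
satisfies `Δ_{ℍⁿ}(d_G^{2-Q}) = 0` at every point of `ℝ^{2n+1} ∖ {0}`; i.e. `d_G^{2-Q}` is,
up to a multiplicative constant, the fundamental solution of the Kohn Laplacian on `ℍⁿ`. -/
theorem gauge_power_is_fundamental_solution (n : ℕ) (Q : ℤ) (hQ : Q = 2 * n + 2)
    (p : Heis n) (hp : p ≠ 0) :
    (∑ i, (Xv n i (Xv n i (fun q => (dG n q) ^ (2 - Q))) p
        + Yv n i (Yv n i (fun q => (dG n q) ^ (2 - Q))) p)) = 0 := by
  classical
  set a : ℝ := -(n : ℝ) / 2 with ha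
  have h0 : (fun q : Heis n => dG n q ^ (2 - Q)) = fun q => GaugeAux.w n q ^ a := by
    funext q
    have hw0 : (0 : ℝ) ≤ GaugeAux.w n q := by
      have h1 := mul_self_nonneg (GaugeAux.S n q)
      have h2 := mul_self_nonneg q.2.2
      unfold GaugeAux.w; nlinarith
    have h1 : ∑ i, q.1 i ^ 2 = ∑ i, q.1 i * q.1 i :=
      Finset.sum_congr rfl fun i _ => by ring
    have h2 : ∑ i, q.2.1 i ^ 2 = ∑ i, q.2.1 i * q.2.1 i :=
      Finset.sum_congr rfl fun i _ => by ring
    have hbase : ((∑ i, q.1 i ^ 2 + ∑ i, q.2.1 i ^ 2) ^ 2 + q.2.2 ^ 2) = GaugeAux.w n q := by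
      rw [h1, h2]; unfold GaugeAux.w GaugeAux.S; ring
    unfold dG
    rw [hbase, ← Real.rpow_intCast (GaugeAux.w n q ^ ((1 : ℝ) / 4)) (2 - Q),
      ← Real.rpow_mul hw0]
    congr 1
    rw [ha, hQ]; push_cast; ring
  rw [h0]
  have hwpos : 0 < GaugeAux.w n p := GaugeAux.w_pos hp
  have hwp : GaugeAux.w n p ≠ 0 := hwpos.ne'
  have hkey : GaugeAux.w n p ^ (a - 2) * GaugeAux.w n p = GaugeAux.w n p ^ (a - 1) := by
    rw [show a - 1 = (a - 2) + 1 by ring, Real.rpow_add hwpos, Real.rpow_one]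
  have hterm : ∀ i : Fin n,
      Xv n i (Xv n i (fun q => GaugeAux.w n q ^ a)) p
        + Yv n i (Yv n i (fun q => GaugeAux.w n q ^ a)) p
      = (a * GaugeAux.w n p ^ (a - 1) * (16 * a)) * (p.1 i * p.1 i + p.2.1 i * p.2.1 i)
        + a * GaugeAux.w n p ^ (a - 1) * (8 * GaugeAux.S n p) := by
    intro i
    rw [GaugeAux.XXv a i hwp, GaugeAux.YYv a i hwp]
    have hw2 : GaugeAux.w n p = GaugeAux.S n p * GaugeAux.S n p + p.2.2 * p.2.2 := rfl
    linear_combination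
      (16 * a * (p.1 i * p.1 i + p.2.1 i * p.2.1 i) * (a - 1)) * hkey
      - (16 * a * (p.1 i * p.1 i + p.2.1 i * p.2.1 i) * (a - 1)
          * (GaugeAux.w n p ^ (a - 2))) * hw2
  rw [Finset.sum_congr rfl fun i _ => hterm i, Finset.sum_add_distrib,
    ← Finset.mul_sum, Finset.sum_const, Finset.card_univ, Fintype.card_fin]
  have hSsum : ∑ i, (p.1 i * p.1 i + p.2.1 i * p.2.1 i) = GaugeAux.S n p := by
    rw [Finset.sum_add_distrib]; rfl
  rw [hSsum, nsmul_eq_mul]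
  have h16 : (16 : ℝ) * a + 8 * n = 0 := by rw [ha]; ring
  linear_combination (GaugeAux.w n p ^ (a - 1) * GaugeAux.S n p * a) * h16
end
end

section
/- Let u be a C³ function defined on an open neighborhood Ω ⊂ ℝ^{2n+1} of the origin. Then for (x,y,t) → 0 the following intrinsic Taylor expansion in the Heisenberg group holds: u(x,y,t) = u(0) + Σ_{i=1}^n ( X_i u(0) x_i + Y_i u(0) y_i ) + (1/2) ( ⟨ D²*_{ℍⁿ} u(0) (x,y), (x,y) ⟩ + 2 t ∂_t u(0) ) + o(‖(x,y,t)‖²), where ‖(x,y,t)‖ = ((|x|²+|y|²)² + t²)^{1/4} is the gauge norm; i.e., the difference between u(x,y,t) and the displayed second-order polynomial, divided by ‖(x,y,t)‖², tends to 0 as (x,y,t) → 0. -/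
open scoped BigOperators

noncomputable section

open Asymptotics Filter

/-- The second-order intrinsic Taylor polynomial of `u` at `0`: the quadratic form of the
symmetrized horizontal Hessian `D²*_{ℍⁿ} u(0)` evaluated at `(x,y)`. -/
def hessianForm (n : ℕ) (u : Heis n → ℝ) (p : Heis n) : ℝ :=
  ∑ i, ∑ j,
    (Xv n i (Xv n j u) 0 * p.1 i * p.1 j
      + ((Xv n i (Yv n j u) 0 + Yv n j (Xv n i u) 0) / 2) * p.1 i * p.2.1 j
      + ((Yv n i (Xv n j u) 0 + Xv n j (Yv n i u) 0) / 2) * p.2.1 i * p.1 j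
      + Yv n i (Yv n j u) 0 * p.2.1 i * p.2.1 j)

-- ===== auxiliary CLMs and field derivatives =====

def cX (n : ℕ) (j : Fin n) : Heis n →L[ℝ] ℝ :=
  (ContinuousLinearMap.proj j).comp (ContinuousLinearMap.fst ℝ (Fin n → ℝ) ((Fin n → ℝ) × ℝ))

def cY (n : ℕ) (j : Fin n) : Heis n →L[ℝ] ℝ :=
  (ContinuousLinearMap.proj j).comp
    ((ContinuousLinearMap.fst ℝ (Fin n → ℝ) ℝ).comp
      (ContinuousLinearMap.snd ℝ (Fin n → ℝ) ((Fin n → ℝ) × ℝ)))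

@[simp] lemma cX_apply (n : ℕ) (j : Fin n) (p : Heis n) : cX n j p = p.1 j := rfl
@[simp] lemma cY_apply (n : ℕ) (j : Fin n) (p : Heis n) : cY n j p = p.2.1 j := rfl

def AX (n : ℕ) (j : Fin n) : Heis n →L[ℝ] Heis n :=
  (cY n j).smulRight ((0, 0, 2) : Heis n)

def AY (n : ℕ) (j : Fin n) : Heis n →L[ℝ] Heis n :=
  (cX n j).smulRight ((0, 0, -2) : Heis n)

@[simp] lemma AX_apply (n : ℕ) (j : Fin n) (p : Heis n) :
    AX n j p = ((0, 0, p.2.1 j * 2) : Heis n) := by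
  simp [AX, ContinuousLinearMap.smulRight_apply, Prod.smul_mk, smul_eq_mul]

@[simp] lemma AY_apply (n : ℕ) (j : Fin n) (p : Heis n) :
    AY n j p = ((0, 0, p.1 j * -2) : Heis n) := by
  simp [AY, ContinuousLinearMap.smulRight_apply, Prod.smul_mk, smul_eq_mul]

lemma hasFDerivAt_VX (n : ℕ) (j : Fin n) :
    HasFDerivAt (fun p : Heis n => ((Pi.single j 1, 0, 2 * p.2.1 j) : Heis n)) (AX n j) 0 := by
  have h := ((AX n j).hasFDerivAt (x := 0)).const_add ((Pi.single j 1, 0, 0) : Heis n)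
  refine h.congr_of_eventuallyEq (Filter.Eventually.of_forall fun p => ?_)
  simp [Prod.ext_iff, mul_comm]

lemma hasFDerivAt_VY (n : ℕ) (j : Fin n) :
    HasFDerivAt (fun p : Heis n => ((0, Pi.single j 1, -(2 * p.1 j)) : Heis n)) (AY n j) 0 := by
  have h := ((AY n j).hasFDerivAt (x := 0)).const_add ((0, Pi.single j 1, 0) : Heis n)
  refine h.congr_of_eventuallyEq (Filter.Eventually.of_forall fun p => ?_)
  simp [Prod.ext_iff]
  ring

lemma key2 {n : ℕ} {u : Heis n → ℝ} {B : Heis n →L[ℝ] Heis n →L[ℝ] ℝ}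
    (hB : HasFDerivAt (fderiv ℝ u) B 0) (V : Heis n → Heis n) (A : Heis n →L[ℝ] Heis n)
    (hV : HasFDerivAt V A 0) (w : Heis n) :
    fderiv ℝ (fun p => fderiv ℝ u p (V p)) 0 w = fderiv ℝ u 0 (A w) + B w (V 0) := by
  rw [(hB.clm_apply hV).fderiv]
  simp

lemma sum_single_smul (n : ℕ) (v : Fin n → ℝ) :
    ∑ i, v i • (Pi.single i 1 : Fin n → ℝ) = v := by
  calc ∑ i, v i • (Pi.single i 1 : Fin n → ℝ) = ∑ i, Pi.single i (v i) := by
        refine Finset.sum_congr rfl fun i _ => ?_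
        rw [← Pi.single_smul, smul_eq_mul, mul_one]
    _ = v := Finset.univ_sum_single v

lemma q_decomp (n : ℕ) (x y : Fin n → ℝ) :
    ((x, y, (0:ℝ)) : Heis n)
      = (∑ i, x i • ((Pi.single i 1, 0, 0) : Heis n))
        + ∑ i, y i • ((0, Pi.single i 1, 0) : Heis n) := by
  simp only [Prod.smul_mk, smul_zero]
  rw [Prod.ext_iff, Prod.ext_iff]
  simp only [Prod.fst_add, Prod.snd_add, Prod.fst_sum, Prod.snd_sum, Finset.sum_const_zero,
    add_zero, zero_add]
  exact ⟨(sum_single_smul n x).symm, (sum_single_smul n y).symm, trivial⟩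

lemma q_decomp1 (n : ℕ) (x y : Fin n → ℝ) :
    ((x, y, (0:ℝ)) : Heis n)
      = ∑ i, (x i • ((Pi.single i 1, 0, 0) : Heis n) + y i • ((0, Pi.single i 1, 0) : Heis n)) := by
  rw [Finset.sum_add_distrib]; exact q_decomp n x y

lemma bilin_sum {E : Type*} [NormedAddCommGroup E] [NormedSpace ℝ E]
    (B : E →L[ℝ] E →L[ℝ] ℝ) {ι : Type*} (s : Finset ι) (v w : ι → E) :
    B (∑ i ∈ s, v i) (∑ j ∈ s, w j) = ∑ i ∈ s, ∑ j ∈ s, B (v i) (w j) := by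
  have h1 : B (∑ i ∈ s, v i) = ∑ i ∈ s, B (v i) := map_sum B v s
  rw [h1, ContinuousLinearMap.coe_sum', Finset.sum_apply]
  exact Finset.sum_congr rfl fun i _ => map_sum _ _ _

-- ===== gauge norm estimates =====

lemma dG_nonneg (n : ℕ) (p : Heis n) : 0 ≤ dG n p := Real.rpow_nonneg (by positivity) _

lemma dG_sq (n : ℕ) (p : Heis n) :
    dG n p ^ 2 = Real.sqrt ((∑ i, p.1 i ^ 2 + ∑ i, p.2.1 i ^ 2) ^ 2 + p.2.2 ^ 2) := by
  rw [dG, ← Real.rpow_natCast _ 2, ← Real.rpow_mul (by positivity), Real.sqrt_eq_rpow]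
  norm_num

lemma abs_t_le (n : ℕ) (p : Heis n) : |p.2.2| ≤ dG n p ^ 2 := by
  rw [dG_sq, ← Real.sqrt_sq_eq_abs]
  apply Real.sqrt_le_sqrt
  nlinarith [sq_nonneg (∑ i, p.1 i ^ 2 + ∑ i, p.2.1 i ^ 2)]

lemma s_le (n : ℕ) (p : Heis n) :
    (∑ i, p.1 i ^ 2 + ∑ i, p.2.1 i ^ 2) ≤ dG n p ^ 2 := by
  rw [dG_sq]
  calc (∑ i, p.1 i ^ 2 + ∑ i, p.2.1 i ^ 2)
      = Real.sqrt ((∑ i, p.1 i ^ 2 + ∑ i, p.2.1 i ^ 2) ^ 2) := (Real.sqrt_sq (by positivity)).symm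
    _ ≤ _ := Real.sqrt_le_sqrt (by nlinarith [sq_nonneg p.2.2])

lemma normx_le (n : ℕ) (p : Heis n) : ‖p.1‖ ≤ dG n p := by
  refine (pi_norm_le_iff_of_nonneg (dG_nonneg n p)).2 fun i => ?_
  rw [Real.norm_eq_abs]
  have h1 : p.1 i ^ 2 ≤ ∑ j, p.1 j ^ 2 :=
    Finset.single_le_sum (f := fun j => p.1 j ^ 2) (fun j _ => sq_nonneg _) (Finset.mem_univ i)
  have h2 := s_le n p
  have h3 : (0:ℝ) ≤ ∑ i, p.2.1 i ^ 2 := by positivity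
  have h4 : |p.1 i| ^ 2 ≤ dG n p ^ 2 := by rw [sq_abs]; nlinarith
  exact (pow_le_pow_iff_left₀ (abs_nonneg _) (dG_nonneg n p) (by norm_num)).1 h4

lemma normy_le (n : ℕ) (p : Heis n) : ‖p.2.1‖ ≤ dG n p := by
  refine (pi_norm_le_iff_of_nonneg (dG_nonneg n p)).2 fun i => ?_
  rw [Real.norm_eq_abs]
  have h1 : p.2.1 i ^ 2 ≤ ∑ j, p.2.1 j ^ 2 :=
    Finset.single_le_sum (f := fun j => p.2.1 j ^ 2) (fun j _ => sq_nonneg _) (Finset.mem_univ i)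
  have h2 := s_le n p
  have h3 : (0:ℝ) ≤ ∑ i, p.1 i ^ 2 := by positivity
  have h4 : |p.2.1 i| ^ 2 ≤ dG n p ^ 2 := by rw [sq_abs]; nlinarith
  exact (pow_le_pow_iff_left₀ (abs_nonneg _) (dG_nonneg n p) (by norm_num)).1 h4

lemma normq_le (n : ℕ) (p : Heis n) : ‖((p.1, p.2.1, (0:ℝ)) : Heis n)‖ ≤ dG n p := by
  rw [Prod.norm_def, Prod.norm_def]
  simp only [norm_zero]
  exact max_le (normx_le n p) (max_le (normy_le n p) (dG_nonneg n p))

lemma norm_et (n : ℕ) : ‖((0, 0, 1) : Heis n)‖ = 1 := by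
  rw [Prod.norm_def, Prod.norm_def]
  simp

lemma dG_tendsto (n : ℕ) : Tendsto (dG n) (nhds 0) (nhds 0) := by
  have h2 : Continuous (fun p : Heis n => (∑ i, p.1 i ^ 2 + ∑ i, p.2.1 i ^ 2) ^ 2 + p.2.2 ^ 2) := by
    fun_prop
  have h3 : Tendsto (fun p : Heis n => (∑ i, p.1 i ^ 2 + ∑ i, p.2.1 i ^ 2) ^ 2 + p.2.2 ^ 2)
      (nhds 0) (nhds 0) := by
    have := h2.tendsto 0
    simpa using this
  have h1 : ContinuousAt (fun x : ℝ => x ^ ((1:ℝ)/4)) 0 :=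
    Real.continuousAt_rpow_const 0 _ (Or.inr (by norm_num))
  have h4 := h1.tendsto.comp h3
  have h0 : (0:ℝ) ^ ((1:ℝ)/4) = 0 := Real.zero_rpow (by norm_num)
  rw [h0] at h4
  exact h4



/-- Second-order Taylor expansion with little-o remainder for a `C²` function at `0`. -/
theorem quad_taylor {E F : Type*} [NormedAddCommGroup E] [NormedSpace ℝ E]
    [NormedAddCommGroup F] [NormedSpace ℝ F] {f : E → F}
    (hf : ContDiffAt ℝ 2 f 0) :
    (fun p : E => f p - f 0 - fderiv ℝ f 0 p
        - (1/2 : ℝ) • fderiv ℝ (fderiv ℝ f) 0 p p) =o[nhds (0:E)] fun p => ‖p‖ ^ 2 := by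
  have hsym : ∀ v w, fderiv ℝ (fderiv ℝ f) 0 v w = fderiv ℝ (fderiv ℝ f) 0 w v :=
    fun v w => (hf.isSymmSndFDerivAt (by simp [minSmoothness_of_isRCLikeNormedField])) v w
  have hgC : ContDiffAt ℝ 1 (fderiv ℝ f) 0 := hf.fderiv_right (by norm_num)
  have hB : HasFDerivAt (fderiv ℝ f) (fderiv ℝ (fderiv ℝ f) 0) 0 :=
    (hgC.differentiableAt (by norm_num)).hasFDerivAt
  have hev : ∀ᶠ q in nhds (0:E), DifferentiableAt ℝ f q := by
    filter_upwards [hf.eventually (by simp)] with q hq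
    exact hq.differentiableAt (by norm_num)
  rw [isLittleO_iff]
  intro ε hε
  have hgo : ∀ᶠ q in nhds (0:E),
      ‖fderiv ℝ f q - fderiv ℝ f 0 - fderiv ℝ (fderiv ℝ f) 0 q‖ ≤ ε * ‖q‖ := by
    have h1 := hasFDerivAt_iff_isLittleO_nhds_zero.1 hB
    have h2 := isLittleO_iff.1 h1 hε
    simpa using h2
  rcases Metric.eventually_nhds_iff.1 (hgo.and hev) with ⟨δ, hδ, hδ'⟩
  have : ∀ᶠ p in nhds (0:E), ‖p‖ < δ := by
    have := Metric.ball_mem_nhds (0:E) hδ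
    filter_upwards [this] with p hp
    simpa [dist_eq_norm] using hp
  filter_upwards [this] with p hp
  set B := fderiv ℝ (fderiv ℝ f) 0 with hBdef
  set R : E → F := fun q => f q - f 0 - fderiv ℝ f 0 q - (1/2 : ℝ) • B q q with hRdef
  have hball : ∀ q ∈ Metric.closedBall (0:E) ‖p‖,
      ‖fderiv ℝ f q - fderiv ℝ f 0 - B q‖ ≤ ε * ‖p‖ ∧ DifferentiableAt ℝ f q := by
    intro q hq
    have hqn : ‖q‖ ≤ ‖p‖ := by simpa [dist_eq_norm] using hq
    have hd : dist q 0 < δ := by simpa [dist_eq_norm] using lt_of_le_of_lt hqn hp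
    obtain ⟨h1, h2⟩ := hδ' hd
    exact ⟨h1.trans (by nlinarith [norm_nonneg q, norm_nonneg p, hε.le]), h2⟩
  have hRderiv : ∀ q ∈ Metric.closedBall (0:E) ‖p‖,
      HasFDerivWithinAt R (fderiv ℝ f q - fderiv ℝ f 0 - B q) (Metric.closedBall (0:E) ‖p‖) q := by
    intro q hq
    obtain ⟨-, hdiff⟩ := hball q hq
    have h1 : HasFDerivAt f (fderiv ℝ f q) q := hdiff.hasFDerivAt
    have h2 : HasFDerivAt (fun y : E => B y y)
        ((B q).comp (ContinuousLinearMap.id ℝ E) + B.flip q) q :=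
      B.hasFDerivAt.clm_apply (hasFDerivAt_id q)
    have h3 : HasFDerivAt R
        (fderiv ℝ f q - fderiv ℝ f 0
          - (1/2 : ℝ) • ((B q).comp (ContinuousLinearMap.id ℝ E) + B.flip q)) q := by
      exact ((h1.sub_const (f 0)).sub (fderiv ℝ f 0).hasFDerivAt).sub (h2.const_smul (1/2 : ℝ))
    have heq : fderiv ℝ f q - fderiv ℝ f 0
          - (1/2 : ℝ) • ((B q).comp (ContinuousLinearMap.id ℝ E) + B.flip q)
        = fderiv ℝ f q - fderiv ℝ f 0 - B q := by
      ext w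
      simp only [ContinuousLinearMap.coe_sub', Pi.sub_apply, ContinuousLinearMap.smul_apply,
        ContinuousLinearMap.add_apply, ContinuousLinearMap.comp_apply,
        ContinuousLinearMap.coe_id', id_eq, ContinuousLinearMap.flip_apply]
      rw [hsym w q]
      module
    rw [heq] at h3
    exact h3.hasFDerivWithinAt
  have hbound : ∀ q ∈ Metric.closedBall (0:E) ‖p‖,
      ‖fderiv ℝ f q - fderiv ℝ f 0 - B q‖ ≤ ε * ‖p‖ := fun q hq => (hball q hq).1
  have hmv := Convex.norm_image_sub_le_of_norm_hasFDerivWithin_le hRderiv hbound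
    (convex_closedBall _ _) (Metric.mem_closedBall_self (norm_nonneg p))
    (show p ∈ Metric.closedBall (0:E) ‖p‖ by simp [Metric.mem_closedBall, dist_eq_norm])
  have hR0 : R 0 = 0 := by simp [hRdef]
  rw [hR0, sub_zero, sub_zero] at hmv
  calc ‖R p‖ ≤ ε * ‖p‖ * ‖p‖ := hmv
    _ ≤ ε * ‖‖p‖ ^ 2‖ := by
        rw [Real.norm_eq_abs, abs_of_nonneg (by positivity)]
        nlinarith [norm_nonneg p]


set_option maxHeartbeats 1000000 in
/-- For a `C³` function `u` on an open neighborhood `Ω` of the origin in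
`ℝ^{2n+1}`, the intrinsic Taylor expansion
`u(x,y,t) = u(0) + Σ_i (X_i u(0) x_i + Y_i u(0) y_i)
  + ½ (⟨D²*_{ℍⁿ} u(0)(x,y),(x,y)⟩ + 2 t ∂_t u(0)) + o(‖(x,y,t)‖²)`
holds as `(x,y,t) → 0`, where `‖·‖` is the gauge norm. -/
theorem intrinsic_taylor_expansion (n : ℕ) (Ω : Set (Heis n)) (hΩ : IsOpen Ω)
    (h0 : (0 : Heis n) ∈ Ω) (u : Heis n → ℝ) (hu : ContDiffOn ℝ 3 u Ω) :
    (fun p : Heis n =>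
        u p - (u 0 + (∑ i, (Xv n i u 0 * p.1 i + Yv n i u 0 * p.2.1 i))
          + (1 / 2) * (hessianForm n u p + 2 * p.2.2 * Tv n u 0)))
      =o[nhds (0 : Heis n)] (fun p : Heis n => (dG n p) ^ 2) := by
  classical
  have hmem : Ω ∈ nhds (0 : Heis n) := hΩ.mem_nhds h0
  have hC3 : ContDiffAt ℝ 3 u 0 := hu.contDiffAt hmem
  have hC2 : ContDiffAt ℝ 2 u 0 := hC3.of_le (by norm_num)
  set B := fderiv ℝ (fderiv ℝ u) 0 with hBdef
  have hsym : ∀ v w, B v w = B w v :=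
    fun v w => (hC2.isSymmSndFDerivAt (by simp [minSmoothness_of_isRCLikeNormedField])) v w
  have hB : HasFDerivAt (fderiv ℝ u) B 0 :=
    ((hC3.fderiv_right (m := 2) (by norm_num)).differentiableAt (by norm_num)).hasFDerivAt
  -- first derivatives
  have hXu : ∀ i, Xv n i u 0 = fderiv ℝ u 0 ((Pi.single i 1, 0, 0) : Heis n) := by
    intro i
    show fderiv ℝ u 0 (Pi.single i 1, 0, 2 * (0:Heis n).2.1 i) = _
    simp
  have hYu : ∀ i, Yv n i u 0 = fderiv ℝ u 0 ((0, Pi.single i 1, 0) : Heis n) := by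
    intro i
    show fderiv ℝ u 0 (0, Pi.single i 1, -(2 * (0:Heis n).1 i)) = _
    simp
  have hL3 : ∀ c : ℝ,
      fderiv ℝ u 0 (((0:Fin n → ℝ), (0:Fin n → ℝ), c) : Heis n) = c * Tv n u 0 := by
    intro c
    have h : (((0:Fin n → ℝ), (0:Fin n → ℝ), c) : Heis n)
        = c • (((0:Fin n → ℝ), (0:Fin n → ℝ), (1:ℝ)) : Heis n) := by
      simp [Prod.smul_mk]
    rw [h, map_smul, smul_eq_mul]; rfl
  -- second derivatives
  have hXX : ∀ i j, Xv n i (Xv n j u) 0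
      = B ((Pi.single i 1, 0, 0) : Heis n) ((Pi.single j 1, 0, 0) : Heis n) := by
    intro i j
    have h := key2 hB _ _ (hasFDerivAt_VX n j)
      ((Pi.single i 1, 0, 2 * (0:Heis n).2.1 i) : Heis n)
    calc Xv n i (Xv n j u) 0
        = fderiv ℝ (fun p => fderiv ℝ u p ((Pi.single j 1, 0, 2 * p.2.1 j) : Heis n)) 0
            ((Pi.single i 1, 0, 2 * (0:Heis n).2.1 i) : Heis n) := rfl
      _ = _ := by rw [h]; simp [hL3]
  have hYY : ∀ i j, Yv n i (Yv n j u) 0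
      = B ((0, Pi.single i 1, 0) : Heis n) ((0, Pi.single j 1, 0) : Heis n) := by
    intro i j
    have h := key2 hB _ _ (hasFDerivAt_VY n j)
      ((0, Pi.single i 1, -(2 * (0:Heis n).1 i)) : Heis n)
    calc Yv n i (Yv n j u) 0
        = fderiv ℝ (fun p => fderiv ℝ u p ((0, Pi.single j 1, -(2 * p.1 j)) : Heis n)) 0
            ((0, Pi.single i 1, -(2 * (0:Heis n).1 i)) : Heis n) := rfl
      _ = _ := by rw [h]; simp [hL3]
  have hXY : ∀ i j, Xv n i (Yv n j u) 0
      = B ((Pi.single i 1, 0, 0) : Heis n) ((0, Pi.single j 1, 0) : Heis n)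
        + ((Pi.single i 1 : Fin n → ℝ) j * -2) * Tv n u 0 := by
    intro i j
    have h := key2 hB _ _ (hasFDerivAt_VY n j)
      ((Pi.single i 1, 0, 2 * (0:Heis n).2.1 i) : Heis n)
    calc Xv n i (Yv n j u) 0
        = fderiv ℝ (fun p => fderiv ℝ u p ((0, Pi.single j 1, -(2 * p.1 j)) : Heis n)) 0
            ((Pi.single i 1, 0, 2 * (0:Heis n).2.1 i) : Heis n) := rfl
      _ = _ := by rw [h]; simp [hL3]; ring
  have hYX : ∀ i j, Yv n j (Xv n i u) 0
      = B ((0, Pi.single j 1, 0) : Heis n) ((Pi.single i 1, 0, 0) : Heis n)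
        + ((Pi.single j 1 : Fin n → ℝ) i * 2) * Tv n u 0 := by
    intro i j
    have h := key2 hB _ _ (hasFDerivAt_VX n i)
      ((0, Pi.single j 1, -(2 * (0:Heis n).1 j)) : Heis n)
    calc Yv n j (Xv n i u) 0
        = fderiv ℝ (fun p => fderiv ℝ u p ((Pi.single i 1, 0, 2 * p.2.1 i) : Heis n)) 0
            ((0, Pi.single j 1, -(2 * (0:Heis n).1 j)) : Heis n) := rfl
      _ = _ := by rw [h]; simp [hL3]; ring
  have hsingle : ∀ i j : Fin n, (Pi.single j 1 : Fin n → ℝ) i = (Pi.single i 1 : Fin n → ℝ) j := by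
    intro i j
    rw [Pi.single_apply, Pi.single_apply]
    simp [eq_comm]
  -- hessian identity
  have hhess : ∀ p : Heis n, hessianForm n u p
      = B ((p.1, p.2.1, (0:ℝ)) : Heis n) ((p.1, p.2.1, (0:ℝ)) : Heis n) := by
    intro p
    have hmix1 : ∀ i j, (Xv n i (Yv n j u) 0 + Yv n j (Xv n i u) 0) / 2
        = B ((Pi.single i 1, 0, 0) : Heis n) ((0, Pi.single j 1, 0) : Heis n) := by
      intro i j
      rw [hXY i j, hYX i j,
        hsym ((0, Pi.single j 1, 0) : Heis n) ((Pi.single i 1, 0, 0) : Heis n), hsingle i j]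
      ring
    have hmix2 : ∀ i j, (Yv n i (Xv n j u) 0 + Xv n j (Yv n i u) 0) / 2
        = B ((0, Pi.single i 1, 0) : Heis n) ((Pi.single j 1, 0, 0) : Heis n) := by
      intro i j
      rw [hYX j i, hXY j i,
        hsym ((Pi.single j 1, 0, 0) : Heis n) ((0, Pi.single i 1, 0) : Heis n), hsingle i j]
      ring
    have hL : hessianForm n u p = ∑ i, ∑ j,
        (B ((Pi.single i 1, 0, 0) : Heis n) ((Pi.single j 1, 0, 0) : Heis n) * p.1 i * p.1 j
         + B ((Pi.single i 1, 0, 0) : Heis n) ((0, Pi.single j 1, 0) : Heis n) * p.1 i * p.2.1 j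
         + B ((0, Pi.single i 1, 0) : Heis n) ((Pi.single j 1, 0, 0) : Heis n) * p.2.1 i * p.1 j
         + B ((0, Pi.single i 1, 0) : Heis n) ((0, Pi.single j 1, 0) : Heis n)
            * p.2.1 i * p.2.1 j) := by
      simp only [hessianForm]
      refine Finset.sum_congr rfl fun i _ => Finset.sum_congr rfl fun j _ => ?_
      rw [hXX i j, hmix1 i j, hmix2 i j, hYY i j]
    rw [hL, q_decomp1 n p.1 p.2.1, bilin_sum]
    refine Finset.sum_congr rfl fun i _ => Finset.sum_congr rfl fun j _ => ?_
    simp only [map_add, map_smul, ContinuousLinearMap.add_apply,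
      ContinuousLinearMap.smul_apply, smul_eq_mul]
    ring
  -- linear part
  have hlin : ∀ p : Heis n, (∑ i, (Xv n i u 0 * p.1 i + Yv n i u 0 * p.2.1 i))
      = fderiv ℝ u 0 ((p.1, p.2.1, (0:ℝ)) : Heis n) := by
    intro p
    rw [q_decomp1 n p.1 p.2.1, map_sum]
    refine Finset.sum_congr rfl fun i _ => ?_
    rw [hXu i, hYu i, map_add, map_smul, map_smul, smul_eq_mul, smul_eq_mul]
    ring
  have hp_decomp : ∀ p : Heis n,
      p = ((p.1, p.2.1, (0:ℝ)) : Heis n) + p.2.2 • ((0, 0, 1) : Heis n) := by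
    intro p
    rw [Prod.ext_iff, Prod.ext_iff]
    simp
  have hBpp : ∀ p : Heis n, B p p
      = B ((p.1, p.2.1, (0:ℝ)) : Heis n) ((p.1, p.2.1, (0:ℝ)) : Heis n)
        + p.2.2 * B ((p.1, p.2.1, (0:ℝ)) : Heis n) ((0, 0, 1) : Heis n)
        + p.2.2 * B ((0, 0, 1) : Heis n) ((p.1, p.2.1, (0:ℝ)) : Heis n)
        + p.2.2 ^ 2 * B ((0, 0, 1) : Heis n) ((0, 0, 1) : Heis n) := by
    intro p
    conv_lhs => rw [hp_decomp p]
    simp only [map_add, map_smul, ContinuousLinearMap.add_apply,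
      ContinuousLinearMap.smul_apply, smul_eq_mul]
    ring
  have hLp : ∀ p : Heis n, fderiv ℝ u 0 p
      = fderiv ℝ u 0 ((p.1, p.2.1, (0:ℝ)) : Heis n) + p.2.2 * Tv n u 0 := by
    intro p
    conv_lhs => rw [hp_decomp p]
    rw [map_add, map_smul, smul_eq_mul]
    rfl
  -- the key pointwise identity
  have key : ∀ p : Heis n,
      u p - (u 0 + (∑ i, (Xv n i u 0 * p.1 i + Yv n i u 0 * p.2.1 i))
          + (1 / 2) * (hessianForm n u p + 2 * p.2.2 * Tv n u 0))
      = (u p - u 0 - fderiv ℝ u 0 p - (1/2 : ℝ) • fderiv ℝ (fderiv ℝ u) 0 p p)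
        + ((1/2) * (p.2.2 * B ((p.1, p.2.1, (0:ℝ)) : Heis n) ((0, 0, 1) : Heis n))
           + (1/2) * (p.2.2 * B ((0, 0, 1) : Heis n) ((p.1, p.2.1, (0:ℝ)) : Heis n))
           + (1/2) * (p.2.2 ^ 2 * B ((0, 0, 1) : Heis n) ((0, 0, 1) : Heis n))) := by
    intro p
    rw [hhess p, hlin p, ← hBdef, hBpp p, hLp p]
    simp only [smul_eq_mul]
    ring
  -- asymptotics
  have hR := quad_taylor hC2
  have hdG1 : ∀ᶠ p in nhds (0 : Heis n), dG n p ≤ 1 :=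
    (dG_tendsto n).eventually (eventually_le_nhds one_pos)
  have hO : (fun p : Heis n => ‖p‖ ^ 2) =O[nhds (0 : Heis n)] fun p => dG n p ^ 2 := by
    refine IsBigO.of_bound 1 ?_
    filter_upwards [hdG1] with p h1
    rw [one_mul, Real.norm_eq_abs, Real.norm_eq_abs, abs_of_nonneg (by positivity),
      abs_of_nonneg (by positivity)]
    have hx := normx_le n p
    have hy := normy_le n p
    have ht := abs_t_le n p
    have hdg := dG_nonneg n p
    have hnp : ‖p‖ ≤ dG n p := by
      rw [Prod.norm_def, Prod.norm_def]
      refine max_le hx (max_le hy ?_)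
      rw [Real.norm_eq_abs]
      nlinarith
    nlinarith [norm_nonneg p]
  have h3 : (fun p : Heis n => dG n p ^ 3) =o[nhds (0 : Heis n)] fun p => dG n p ^ 2 := by
    rw [isLittleO_iff]
    intro c hc
    filter_upwards [(dG_tendsto n).eventually (eventually_le_nhds hc)] with p hp
    have hdg := dG_nonneg n p
    rw [Real.norm_eq_abs, Real.norm_eq_abs, abs_of_nonneg (by positivity),
      abs_of_nonneg (by positivity)]
    nlinarith
  have h4 : (fun p : Heis n => dG n p ^ 4) =o[nhds (0 : Heis n)] fun p => dG n p ^ 2 := by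
    rw [isLittleO_iff]
    intro c hc
    filter_upwards [(dG_tendsto n).eventually (eventually_le_nhds hc), hdG1] with p hp hp1
    have hdg := dG_nonneg n p
    rw [Real.norm_eq_abs, Real.norm_eq_abs, abs_of_nonneg (by positivity),
      abs_of_nonneg (by positivity)]
    have h5 : dG n p * dG n p ≤ c * 1 := mul_le_mul hp hp1 hdg hc.le
    nlinarith [h5, sq_nonneg (dG n p)]
  have hBqet : ∀ p : Heis n,
      |B ((p.1, p.2.1, (0:ℝ)) : Heis n) ((0, 0, 1) : Heis n)| ≤ ‖B‖ * dG n p := by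
    intro p
    have h1 := B.le_opNorm₂ ((p.1, p.2.1, (0:ℝ)) : Heis n) ((0, 0, 1) : Heis n)
    rw [Real.norm_eq_abs, norm_et] at h1
    nlinarith [normq_le n p, norm_nonneg B, dG_nonneg n p,
      norm_nonneg (((p.1, p.2.1, (0:ℝ)) : Heis n))]
  have hBetq : ∀ p : Heis n,
      |B ((0, 0, 1) : Heis n) ((p.1, p.2.1, (0:ℝ)) : Heis n)| ≤ ‖B‖ * dG n p := by
    intro p
    have h1 := B.le_opNorm₂ ((0, 0, 1) : Heis n) ((p.1, p.2.1, (0:ℝ)) : Heis n)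
    rw [Real.norm_eq_abs, norm_et] at h1
    nlinarith [normq_le n p, norm_nonneg B, dG_nonneg n p,
      norm_nonneg (((p.1, p.2.1, (0:ℝ)) : Heis n))]
  have hE1 : (fun p : Heis n => p.2.2 * B ((p.1, p.2.1, (0:ℝ)) : Heis n) ((0, 0, 1) : Heis n))
      =O[nhds (0 : Heis n)] fun p => dG n p ^ 3 := by
    refine IsBigO.of_bound ‖B‖ (Eventually.of_forall fun p => ?_)
    rw [Real.norm_eq_abs, Real.norm_eq_abs, abs_mul,
      abs_of_nonneg (pow_nonneg (dG_nonneg n p) 3)]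
    have h1 := abs_t_le n p
    have h2 := hBqet p
    have hdg := dG_nonneg n p
    nlinarith [abs_nonneg p.2.2,
      abs_nonneg (B ((p.1, p.2.1, (0:ℝ)) : Heis n) ((0, 0, 1) : Heis n)), norm_nonneg B]
  have hE2 : (fun p : Heis n => p.2.2 * B ((0, 0, 1) : Heis n) ((p.1, p.2.1, (0:ℝ)) : Heis n))
      =O[nhds (0 : Heis n)] fun p => dG n p ^ 3 := by
    refine IsBigO.of_bound ‖B‖ (Eventually.of_forall fun p => ?_)
    rw [Real.norm_eq_abs, Real.norm_eq_abs, abs_mul,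
      abs_of_nonneg (pow_nonneg (dG_nonneg n p) 3)]
    have h1 := abs_t_le n p
    have h2 := hBetq p
    have hdg := dG_nonneg n p
    nlinarith [abs_nonneg p.2.2,
      abs_nonneg (B ((0, 0, 1) : Heis n) ((p.1, p.2.1, (0:ℝ)) : Heis n)), norm_nonneg B]
  have hE3 : (fun p : Heis n => p.2.2 ^ 2 * B ((0, 0, 1) : Heis n) ((0, 0, 1) : Heis n))
      =O[nhds (0 : Heis n)] fun p => dG n p ^ 4 := by
    refine IsBigO.of_bound ‖B‖ (Eventually.of_forall fun p => ?_)
    rw [Real.norm_eq_abs, Real.norm_eq_abs, abs_mul,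
      abs_of_nonneg (pow_nonneg (dG_nonneg n p) 4)]
    have h1 := abs_t_le n p
    have h2 := B.le_opNorm₂ ((0, 0, 1) : Heis n) ((0, 0, 1) : Heis n)
    rw [Real.norm_eq_abs, norm_et] at h2
    have hdg := dG_nonneg n p
    have ha : |p.2.2| * |p.2.2| ≤ dG n p ^ 2 * dG n p ^ 2 :=
      mul_le_mul h1 h1 (abs_nonneg _) (by positivity)
    have hb : |p.2.2 ^ 2| = |p.2.2| * |p.2.2| := by rw [pow_two, abs_mul]
    rw [hb]
    nlinarith [abs_nonneg p.2.2, abs_nonneg (B ((0, 0, 1) : Heis n) ((0, 0, 1) : Heis n)),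
      norm_nonneg B, ha]
  rw [funext key]
  exact (hR.trans_isBigO hO).add
    ((((hE1.trans_isLittleO h3).const_mul_left (1/2)).add
      ((hE2.trans_isLittleO h3).const_mul_left (1/2))).add
      ((hE3.trans_isLittleO h4).const_mul_left (1/2)))
end
end
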